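/- If p and q are coprime positive integers, then the Euclidean distance from B(p,q) to the point (p,q) equals the Euclidean distance from B(q,p) to the origin (0,0). -/

import Mathlib

/-- The point (x,y) in the Euclidean plane. -/
noncomputable def V (x y : ℝ) : EuclideanSpace ℝ (Fin 2) := WithLp.toLp 2 ![x, y]

/-- the distance from B(p,q) to (p,q) equals the distance from
B(q,p) to the origin. Here (a,b) = B(p,q) and (c,d) = B(q,p). -/
theorem bezout_dist_eq (p q a b c d : ℤ) (hp : 0 < p) (hq : 0 < q)
    (hpq : IsCoprime p q)
    (ha : 0 < a) (hap : a ≤ p) (hb : 0 ≤ b) (hbq : b < q)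
    (hbez : a * q - b * p = 1)
    (hc : 0 < c) (hcq : c ≤ q) (hd : 0 ≤ d) (hdp : d < p)
    (hbez' : c * p - d * q = 1) :
    ‖V (a : ℝ) (b : ℝ) - V (p : ℝ) (q : ℝ)‖ = ‖V (c : ℝ) (d : ℝ) - V 0 0‖ := by
  -- uniqueness: c = q - b, d = p - a
  have h1 : (c - (q - b)) * p = (d - (p - a)) * q := by ring_nf; linarith
  have hdvd : q ∣ (c - (q - b)) * p := ⟨d - (p - a), by linarith [h1]⟩
  have hdvd2 : q ∣ (c - (q - b)) := (IsCoprime.dvd_of_dvd_mul_right hpq.symm) hdvd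
  have hceq : c = q - b := by
    rcases hdvd2 with ⟨k, hk⟩
    have hk0 : k = 0 := by nlinarith
    subst hk0
    simp at hk
    omega
  have hdeq : d = p - a := by
    have := h1
    rw [hceq] at this
    have hq' : (q : ℤ) ≠ 0 := by omega
    nlinarith
  have key : ∀ x y : ℝ, ‖V x y‖ = Real.sqrt (x ^ 2 + y ^ 2) := by
    intro x y
    rw [EuclideanSpace.norm_eq]
    simp [V, Fin.sum_univ_two, sq]
  have hsub : V (a : ℝ) (b : ℝ) - V (p : ℝ) (q : ℝ) = V ((a : ℝ) - p) ((b : ℝ) - q) := by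
    simp only [V]
    ext i
    fin_cases i <;> simp [PiLp.sub_apply]
  have hsub2 : V (c : ℝ) (d : ℝ) - V 0 0 = V (c : ℝ) (d : ℝ) := by
    simp only [V]
    ext i
    fin_cases i <;> simp [PiLp.sub_apply]
  rw [hsub, hsub2, key, key]
  have hc' : (c : ℝ) = q - b := by exact_mod_cast congrArg Int.cast hceq
  have hd' : (d : ℝ) = p - a := by exact_mod_cast congrArg Int.cast hdeq
  rw [hc', hd']
  ring_nf
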